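/- Let 𝒫 be a set of prime numbers and let C = ℤ[𝒫⁻¹] be the subring of ℚ generated by {1/p : p ∈ 𝒫}, regarded as an additive abelian group. If D ≤ C is a finite index subgroup, then the index [C:D] has no prime divisor in 𝒫, and D = [C:D]·C. -/

import Mathlib

/-- The subring `ℤ[𝒫⁻¹]` of `ℚ` generated by the inverses of the primes in `𝒫`. -/
noncomputable def PRing (P : Set ℕ) : Subring ℚ :=
  Subring.closure {x : ℚ | ∃ p ∈ P, x = (p : ℚ)⁻¹}

lemma PRing.inv_nat_mem (P : Set ℕ) : ∀ s : ℕ, s ≠ 0 →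
    (∀ q : ℕ, q.Prime → q ∣ s → q ∈ P) → ((s : ℚ))⁻¹ ∈ PRing P := by
  intro s
  induction s using Nat.strong_induction_on with
  | _ s ih =>
    intro hs0 hdiv
    rcases eq_or_ne s 1 with rfl | hs1
    · simpa using Subring.one_mem (PRing P)
    · have hp : s.minFac.Prime := Nat.minFac_prime hs1
      obtain ⟨t, ht⟩ : s.minFac ∣ s := Nat.minFac_dvd s
      have hpP : s.minFac ∈ P := hdiv _ hp (Nat.minFac_dvd s)
      have ht0 : t ≠ 0 := by rintro rfl; simp at ht; exact hs0 ht
      have htlt : t < s := by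
        rw [ht]
        exact lt_mul_of_one_lt_left (Nat.pos_of_ne_zero ht0) hp.one_lt
      have hc : (s:ℚ) = (s.minFac:ℚ) * (t:ℚ) := by exact_mod_cast congrArg (Nat.cast : ℕ → ℚ) ht
      have h1 : ((s:ℚ))⁻¹ = ((s.minFac:ℚ))⁻¹ * ((t:ℚ))⁻¹ := by
        rw [hc, mul_inv]
      rw [h1]
      exact Subring.mul_mem _ (Subring.subset_closure ⟨s.minFac, hpP, rfl⟩)
        (ih t htlt ht0 (fun q hq hqd =>
          hdiv q hq (hqd.trans (Dvd.intro_left _ ht.symm))))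

lemma PRing.exists_rep (P : Set ℕ) (hP : ∀ p ∈ P, p.Prime) {x : ℚ} (hx : x ∈ PRing P) :
    ∃ (a : ℤ) (s : ℕ), s ≠ 0 ∧ (∀ q : ℕ, q.Prime → q ∣ s → q ∈ P) ∧ x * s = a := by
  induction hx using Subring.closure_induction with
  | mem x hx =>
    obtain ⟨p, hp, rfl⟩ := hx
    have hpp := hP p hp
    refine ⟨1, p, hpp.ne_zero, ?_, ?_⟩
    · intro q hq hqd
      rwa [(Nat.prime_dvd_prime_iff_eq hq hpp).mp hqd]
    · rw [inv_mul_cancel₀ (by exact_mod_cast hpp.ne_zero)]; norm_num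
  | zero => exact ⟨0, 1, one_ne_zero, by intro q hq hqd; simp [Nat.dvd_one] at hqd; exact absurd hqd hq.ne_one, by simp⟩
  | one => exact ⟨1, 1, one_ne_zero, by intro q hq hqd; simp [Nat.dvd_one] at hqd; exact absurd hqd hq.ne_one, by simp⟩
  | add x y hx hy ihx ihy =>
    obtain ⟨a, s, hs0, hsd, hxs⟩ := ihx
    obtain ⟨b, t, ht0, htd, hyt⟩ := ihy
    refine ⟨a * t + b * s, s * t, Nat.mul_ne_zero hs0 ht0, ?_, ?_⟩
    · intro q hq hqd
      rcases (Nat.Prime.dvd_mul hq).mp hqd with h | h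
      · exact hsd q hq h
      · exact htd q hq h
    · push_cast
      linear_combination (t:ℚ) * hxs + (s:ℚ) * hyt
  | neg x hx ihx =>
    obtain ⟨a, s, hs0, hsd, hxs⟩ := ihx
    exact ⟨-a, s, hs0, hsd, by push_cast; linear_combination -hxs⟩
  | mul x y hx hy ihx ihy =>
    obtain ⟨a, s, hs0, hsd, hxs⟩ := ihx
    obtain ⟨b, t, ht0, htd, hyt⟩ := ihy
    refine ⟨a * b, s * t, Nat.mul_ne_zero hs0 ht0, ?_, ?_⟩
    · intro q hq hqd
      rcases (Nat.Prime.dvd_mul hq).mp hqd with h | h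
      · exact hsd q hq h
      · exact htd q hq h
    · push_cast
      linear_combination (y * (t:ℚ)) * hxs + (a:ℚ) * hyt

/-- For `C = ℤ[𝒫⁻¹]`, every finite index subgroup `D ≤ C` has index without prime divisors
in `𝒫`, and `D = [C:D]·C`. -/
theorem finiteIndex_subgroup_PRing (P : Set ℕ) (hP : ∀ p ∈ P, p.Prime)
    (D : AddSubgroup ℚ) (hle : D ≤ (PRing P).toAddSubgroup)
    (hfi : D.relIndex (PRing P).toAddSubgroup ≠ 0) :
    (∀ p : ℕ, p.Prime → p ∣ D.relIndex (PRing P).toAddSubgroup → p ∉ P) ∧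
    D = ((PRing P).toAddSubgroup).map
      (AddMonoidHom.mulLeft ((D.relIndex (PRing P).toAddSubgroup : ℚ))) := by
  set C := (PRing P).toAddSubgroup with hC
  set n := D.relIndex C with hn
  set D' := D.addSubgroupOf C with hD'
  have hnQ : n = Nat.card (↥C ⧸ D') := AddSubgroup.index_eq_card D'
  haveI hfin : Finite (↥C ⧸ D') := Nat.finite_of_card_ne_zero (by rw [← hnQ]; exact hfi)
  set π : ↥C →+ ↥C ⧸ D' := QuotientAddGroup.mk' D' with hπ
  have hπs : Function.Surjective π := QuotientAddGroup.mk'_surjective D'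
  have hmemC : ∀ {x : ℚ}, x ∈ PRing P → x ∈ C := fun h => h
  -- surjectivity of multiplication by p ∈ P on the quotient
  have hsurj : ∀ p ∈ P, Function.Surjective (fun q : ↥C ⧸ D' => p • q) := by
    intro p hpP q
    obtain ⟨x, rfl⟩ := hπs q
    have hpp := hP p hpP
    have hy : (x : ℚ) * (p:ℚ)⁻¹ ∈ C := by
      refine hmemC (Subring.mul_mem _ x.2 (PRing.inv_nat_mem P p hpp.ne_zero ?_))
      intro q hq hqd
      rwa [(Nat.prime_dvd_prime_iff_eq hq hpp).mp hqd]
    refine ⟨π ⟨(x:ℚ) * (p:ℚ)⁻¹, hy⟩, ?_⟩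
    have hp0 : (p:ℚ) ≠ 0 := Nat.cast_ne_zero.mpr hpp.ne_zero
    have hps : (p:ℕ) • (⟨(x:ℚ) * (p:ℚ)⁻¹, hy⟩ : ↥C) = x := by
      ext
      push_cast
      field_simp
      rw [nsmul_eq_mul]; field_simp
    show p • π ⟨(x:ℚ) * (p:ℚ)⁻¹, hy⟩ = π x
    rw [← map_nsmul, hps]
  -- Part 1
  have part1 : ∀ p : ℕ, p.Prime → p ∣ n → p ∉ P := by
    intro p hp hpn hpP
    haveI : Fintype (↥C ⧸ D') := Fintype.ofFinite _
    haveI : Fact p.Prime := ⟨hp⟩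
    obtain ⟨g, hg⟩ := exists_prime_addOrderOf_dvd_card (G := ↥C ⧸ D') p
      (by rw [← Nat.card_eq_fintype_card, ← hnQ]; exact hpn)
    have hinj : Function.Injective (fun q : ↥C ⧸ D' => p • q) :=
      (Finite.injective_iff_surjective).mpr (hsurj p hpP)
    have h1 : p • g = 0 := by rw [← hg]; exact addOrderOf_nsmul_eq_zero g
    have h2 : g ≠ 0 := by
      intro h
      rw [h, addOrderOf_zero] at hg
      exact absurd hg.symm hp.ne_one
    exact h2 (hinj (show p • g = p • 0 by rw [h1, smul_zero]))
  -- n • C ⊆ D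
  haveI : D'.FiniteIndex := ⟨by rw [← AddSubgroup.relIndex]; exact hfi⟩
  have hnCD : ∀ x : ↥C, (n:ℚ) * (x:ℚ) ∈ D := by
    intro x
    have h1 : n • x ∈ D' := by
      have := AddSubgroup.nsmul_index_mem D' x
      rwa [← AddSubgroup.relIndex] at this
    have h2 : ((n • x : ↥C) : ℚ) ∈ D := h1
    rw [AddSubgroup.coe_nsmul] at h2
    rwa [nsmul_eq_mul] at h2
  -- the generator of the quotient
  have h1C : (1:ℚ) ∈ C := hmemC (Subring.one_mem _)
  set g1 : ↥C ⧸ D' := π ⟨(1:ℚ), h1C⟩ with hg1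
  have hnq0 : ∀ q : ↥C ⧸ D', (n:ℤ) • q = 0 := by
    intro q
    obtain ⟨x, rfl⟩ := hπs q
    have h1 : n • x ∈ D' := by
      have := AddSubgroup.nsmul_index_mem D' x
      rwa [← AddSubgroup.relIndex] at this
    rw [natCast_zsmul, ← map_nsmul, hπ, QuotientAddGroup.mk'_apply,
      QuotientAddGroup.eq_zero_iff]
    exact h1
  have hgen : ∀ q : ↥C ⧸ D', ∃ k : ℤ, q = k • g1 := by
    intro q
    obtain ⟨x, rfl⟩ := hπs q
    obtain ⟨a, s, hs0, hsdiv, hxs⟩ := PRing.exists_rep P hP x.2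
    have hco : IsCoprime (s:ℤ) (n:ℤ) := by
      rw [Int.isCoprime_iff_gcd_eq_one, Int.gcd_natCast_natCast]
      by_contra hne
      obtain ⟨q, hq, hqs, hqn⟩ := Nat.Prime.not_coprime_iff_dvd.mp hne
      exact part1 q hq hqn (hsdiv q hq hqs)
    obtain ⟨u, v, huv⟩ := hco
    have hsx : (s:ℤ) • (π x) = a • g1 := by
      rw [← map_zsmul, ← map_zsmul]
      congr 1
      ext
      push_cast
      simp only [zsmul_eq_mul, mul_one]
      push_cast
      linarith [hxs]
    refine ⟨u * a, ?_⟩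
    calc π x = ((u * s + v * n : ℤ)) • π x := by rw [huv, one_zsmul]
      _ = u • ((s:ℤ) • π x) + v • ((n:ℤ) • π x) := by
          rw [add_zsmul, mul_zsmul, mul_zsmul]
      _ = (u * a) • g1 := by rw [hsx, hnq0, smul_zero, add_zero, mul_zsmul]
  have hord : addOrderOf g1 = n := by
    have htop : AddSubgroup.zmultiples g1 = ⊤ := by
      ext q
      simp only [AddSubgroup.mem_top, iff_true]
      obtain ⟨k, hk⟩ := hgen q
      exact hk ▸ AddSubgroup.zsmul_mem _ (AddSubgroup.mem_zmultiples g1) k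
    have h := Nat.card_zmultiples g1
    rw [htop] at h
    rw [← h, hnQ]
    exact Nat.card_congr AddSubgroup.topEquiv.toEquiv
  -- integers in D are divisible by n
  have hint : ∀ a : ℤ, (a:ℚ) ∈ D → (n:ℤ) ∣ a := by
    intro a ha
    have hmem : ((a:ℤ):ℚ) ∈ C := hmemC (intCast_mem (PRing P) a)
    have hsm : a • (⟨(1:ℚ), h1C⟩ : ↥C) = ⟨(a:ℚ), hmem⟩ := by
      ext
      simp [zsmul_eq_mul]
    have hz : a • g1 = 0 := by
      rw [hg1, ← map_zsmul, hsm]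
      rw [hπ]
      rw [QuotientAddGroup.mk'_apply]
      rw [QuotientAddGroup.eq_zero_iff]
      exact ha
    rw [← hord]
    exact addOrderOf_dvd_iff_zsmul_eq_zero.mpr hz
  refine ⟨part1, ?_⟩
  ext d
  rw [AddSubgroup.mem_map]
  constructor
  · intro hd
    have hdC : d ∈ C := hle hd
    obtain ⟨a, s, hs0, hsdiv, hds⟩ := PRing.exists_rep P hP hdC
    have haD : ((a:ℤ):ℚ) ∈ D := by
      rw [← hds, mul_comm, ← nsmul_eq_mul]
      exact AddSubgroup.nsmul_mem D hd s
    obtain ⟨b, hb⟩ := hint a haD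
    have hsQ : (s:ℚ) ≠ 0 := Nat.cast_ne_zero.mpr hs0
    refine ⟨(b:ℚ) * ((s:ℚ))⁻¹, hmemC (Subring.mul_mem _ (intCast_mem _ b)
      (PRing.inv_nat_mem P s hs0 hsdiv)), ?_⟩
    show (n:ℚ) * ((b:ℚ) * ((s:ℚ))⁻¹) = d
    have hb' : ((a:ℤ):ℚ) = (n:ℚ) * (b:ℚ) := by push_cast [hb]; ring
    have hkey : d * s = (n:ℚ) * b := by rw [hds, hb']
    field_simp
    linarith [hkey]
  · rintro ⟨c, hcC, rfl⟩
    show (n:ℚ) * c ∈ D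
    exact hnCD ⟨c, hcC⟩
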